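/- Chain rule for the density-operator Radon–Nikodym derivative: let ρ, σ, τ be positive semidefinite Hermitian K×K complex matrices with ρ ≪ σ and σ ≪ τ. Then for every K×K complex matrix X, φ(ρ,τ)[X] = φ(ρ,σ)[φ(σ,τ)[X]]. -/

import Mathlib

open Matrix
open scoped ComplexOrder

/-- A density operator: positive semidefinite (hence Hermitian) with trace 1. -/
def IsDensityOp {K : ℕ} (ρ : Matrix (Fin K) (Fin K) ℂ) : Prop :=
  ρ.PosSemidef ∧ ρ.trace = 1

/-- σ ≪ ρ : every null vector of ρ is a null vector of σ. -/
def AbsCont {K : ℕ} (σ ρ : Matrix (Fin K) (Fin K) ℂ) : Prop :=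
  ∀ ψ : Fin K → ℂ, ρ *ᵥ ψ = 0 → σ *ᵥ ψ = 0

/-- ρ ≈ σ : mutual absolute continuity. -/
def EquivDO {K : ℕ} (ρ σ : Matrix (Fin K) (Fin K) ℂ) : Prop := AbsCont σ ρ ∧ AbsCont ρ σ

/-- ρ^{-1/2}: the Moore–Penrose pseudoinverse of the positive semidefinite square root
ρ^{1/2} of a positive semidefinite Hermitian matrix ρ, via the spectral decomposition. -/
noncomputable def invSqrt {K : ℕ} (ρ : Matrix (Fin K) (Fin K) ℂ) (hρ : ρ.IsHermitian) :
    Matrix (Fin K) (Fin K) ℂ :=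
  (hρ.eigenvectorUnitary : Matrix (Fin K) (Fin K) ℂ) *
    Matrix.diagonal (fun i => ((Real.sqrt (hρ.eigenvalues i))⁻¹ : ℂ)) *
    star (hρ.eigenvectorUnitary : Matrix (Fin K) (Fin K) ℂ)

/-- The old Mathlib `Matrix.PosSemidef.sqrt`, restated with its original definition. -/
noncomputable def psdSqrt {K : ℕ} (A : Matrix (Fin K) (Fin K) ℂ) (hA : A.PosSemidef) :
    Matrix (Fin K) (Fin K) ℂ :=
  (hA.1.eigenvectorUnitary : Matrix (Fin K) (Fin K) ℂ) *
    Matrix.diagonal ((↑) ∘ (fun x : ℝ => Real.sqrt x) ∘ hA.1.eigenvalues) *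
    (star hA.1.eigenvectorUnitary : Matrix (Fin K) (Fin K) ℂ)

/-- The density-operator Radon–Nikodym derivative φ(σ,ρ)[X] = σ^{1/2} ρ^{-1/2} X ρ^{-1/2} σ^{1/2}. -/
noncomputable def rnDeriv {K : ℕ} (σ ρ : Matrix (Fin K) (Fin K) ℂ)
    (hσ : σ.PosSemidef) (hρ : ρ.PosSemidef) (X : Matrix (Fin K) (Fin K) ℂ) :
    Matrix (Fin K) (Fin K) ℂ :=
  psdSqrt σ hσ * invSqrt ρ hρ.1 * X * invSqrt ρ hρ.1 * psdSqrt σ hσ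

/-- The projection onto the range of σ. -/
noncomputable def rangeProj {K : ℕ} (σ : Matrix (Fin K) (Fin K) ℂ) (hσ : σ.IsHermitian) :
    Matrix (Fin K) (Fin K) ℂ :=
  (hσ.eigenvectorUnitary : Matrix (Fin K) (Fin K) ℂ) *
    Matrix.diagonal (fun i => (((Real.sqrt (hσ.eigenvalues i))⁻¹ * Real.sqrt (hσ.eigenvalues i) : ℝ) : ℂ)) *
    star (hσ.eigenvectorUnitary : Matrix (Fin K) (Fin K) ℂ)

lemma star_mul_self_unit {K : ℕ} (σ : Matrix (Fin K) (Fin K) ℂ) (hσ : σ.IsHermitian) :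
    star (hσ.eigenvectorUnitary : Matrix (Fin K) (Fin K) ℂ) *
      (hσ.eigenvectorUnitary : Matrix (Fin K) (Fin K) ℂ) = 1 :=
  Matrix.mem_unitaryGroup_iff'.mp (hσ.eigenvectorUnitary).2

lemma conj_mul_conj {K : ℕ} (σ : Matrix (Fin K) (Fin K) ℂ) (hσ : σ.IsHermitian)
    (d e : Fin K → ℂ) :
    ((hσ.eigenvectorUnitary : Matrix (Fin K) (Fin K) ℂ) * Matrix.diagonal d *
      star (hσ.eigenvectorUnitary : Matrix (Fin K) (Fin K) ℂ)) *
    ((hσ.eigenvectorUnitary : Matrix (Fin K) (Fin K) ℂ) * Matrix.diagonal e *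
      star (hσ.eigenvectorUnitary : Matrix (Fin K) (Fin K) ℂ)) =
    (hσ.eigenvectorUnitary : Matrix (Fin K) (Fin K) ℂ) *
      Matrix.diagonal (fun i => d i * e i) *
      star (hσ.eigenvectorUnitary : Matrix (Fin K) (Fin K) ℂ) := by
  have h := star_mul_self_unit σ hσ
  simp only [mul_assoc]
  rw [← mul_assoc (star (hσ.eigenvectorUnitary : Matrix (Fin K) (Fin K) ℂ))
    (hσ.eigenvectorUnitary : Matrix (Fin K) (Fin K) ℂ), h, one_mul,
    ← mul_assoc (Matrix.diagonal d) (Matrix.diagonal e), diagonal_mul_diagonal]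

lemma spec_eq' {K : ℕ} (σ : Matrix (Fin K) (Fin K) ℂ) (hσ : σ.IsHermitian) :
    σ = (hσ.eigenvectorUnitary : Matrix (Fin K) (Fin K) ℂ) *
      Matrix.diagonal (RCLike.ofReal ∘ hσ.eigenvalues) *
      star (hσ.eigenvectorUnitary : Matrix (Fin K) (Fin K) ℂ) :=
  hσ.spectral_theorem

lemma psdSqrt_conjTranspose {K : ℕ} (A : Matrix (Fin K) (Fin K) ℂ) (hA : A.PosSemidef) :
    (psdSqrt A hA)ᴴ = psdSqrt A hA := by
  rw [psdSqrt, conjTranspose_mul, conjTranspose_mul, diagonal_conjTranspose]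
  have hd : star ((↑) ∘ (fun x : ℝ => Real.sqrt x) ∘ hA.1.eigenvalues : Fin K → ℂ) =
      (↑) ∘ (fun x : ℝ => Real.sqrt x) ∘ hA.1.eigenvalues :=
    funext fun i => Complex.conj_ofReal _
  rw [hd, ← star_eq_conjTranspose, ← star_eq_conjTranspose, star_star, Matrix.mul_assoc]

lemma conj_diag_congr {K : ℕ} (σ : Matrix (Fin K) (Fin K) ℂ) (hσ : σ.IsHermitian)
    {d e : Fin K → ℂ} (h : ∀ i, d i = e i) :
    (hσ.eigenvectorUnitary : Matrix (Fin K) (Fin K) ℂ) * Matrix.diagonal d *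
      star (hσ.eigenvectorUnitary : Matrix (Fin K) (Fin K) ℂ) =
    (hσ.eigenvectorUnitary : Matrix (Fin K) (Fin K) ℂ) * Matrix.diagonal e *
      star (hσ.eigenvectorUnitary : Matrix (Fin K) (Fin K) ℂ) := by
  rw [show d = e from funext h]

lemma psdSqrt_mul_self {K : ℕ} (A : Matrix (Fin K) (Fin K) ℂ) (hA : A.PosSemidef) :
    psdSqrt A hA * psdSqrt A hA = A := by
  rw [psdSqrt, conj_mul_conj]
  conv_rhs => rw [spec_eq' A hA.1]
  refine conj_diag_congr A hA.1 fun i => ?_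
  simp only [Function.comp_apply]
  rw [← Complex.ofReal_mul, Real.mul_self_sqrt (hA.eigenvalues_nonneg i)]
  rfl

lemma invSqrt_mul_sqrt {K : ℕ} (σ : Matrix (Fin K) (Fin K) ℂ) (hσ : σ.PosSemidef) :
    invSqrt σ hσ.1 * psdSqrt σ hσ = rangeProj σ hσ.1 := by
  rw [invSqrt, psdSqrt, rangeProj, conj_mul_conj]
  refine conj_diag_congr σ hσ.1 fun i => ?_
  simp only [Function.comp_apply]
  push_cast
  rfl

lemma sqrt_mul_invSqrt {K : ℕ} (σ : Matrix (Fin K) (Fin K) ℂ) (hσ : σ.PosSemidef) :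
    psdSqrt σ hσ * invSqrt σ hσ.1 = rangeProj σ hσ.1 := by
  rw [invSqrt, psdSqrt, rangeProj, conj_mul_conj]
  refine conj_diag_congr σ hσ.1 fun i => ?_
  simp only [Function.comp_apply]
  push_cast
  rw [mul_comm]

lemma rangeProj_isHermitian {K : ℕ} (σ : Matrix (Fin K) (Fin K) ℂ) (hσ : σ.IsHermitian) :
    (rangeProj σ hσ).IsHermitian := by
  have hD : (Matrix.diagonal (fun i =>
      (((Real.sqrt (hσ.eigenvalues i))⁻¹ * Real.sqrt (hσ.eigenvalues i) : ℝ) : ℂ))).IsHermitian := by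
    rw [Matrix.IsHermitian, diagonal_conjTranspose]
    rw [show (star fun i => (((Real.sqrt (hσ.eigenvalues i))⁻¹ * Real.sqrt (hσ.eigenvalues i) : ℝ) : ℂ))
        = fun i => (((Real.sqrt (hσ.eigenvalues i))⁻¹ * Real.sqrt (hσ.eigenvalues i) : ℝ) : ℂ) from
      funext fun i => Complex.conj_ofReal _]
  exact Matrix.isHermitian_mul_mul_conjTranspose _ hD

lemma sigma_mul_rangeProj {K : ℕ} (σ : Matrix (Fin K) (Fin K) ℂ) (hσ : σ.PosSemidef) :
    σ * rangeProj σ hσ.1 = σ := by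
  have key : ((hσ.1.eigenvectorUnitary : Matrix (Fin K) (Fin K) ℂ) *
      Matrix.diagonal (RCLike.ofReal ∘ hσ.1.eigenvalues) *
      star (hσ.1.eigenvectorUnitary : Matrix (Fin K) (Fin K) ℂ)) * rangeProj σ hσ.1 =
      (hσ.1.eigenvectorUnitary : Matrix (Fin K) (Fin K) ℂ) *
      Matrix.diagonal (RCLike.ofReal ∘ hσ.1.eigenvalues) *
      star (hσ.1.eigenvectorUnitary : Matrix (Fin K) (Fin K) ℂ) := by
    rw [rangeProj, conj_mul_conj]
    refine conj_diag_congr σ hσ.1 fun i => ?_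
    rcases eq_or_ne (hσ.1.eigenvalues i) 0 with h | h
    · simp [Function.comp, h]
    · have hpos : 0 < hσ.1.eigenvalues i := lt_of_le_of_ne (hσ.eigenvalues_nonneg i) (Ne.symm h)
      have hs : Real.sqrt (hσ.1.eigenvalues i) ≠ 0 := by positivity
      simp [Function.comp, inv_mul_cancel₀ hs]
  calc σ * rangeProj σ hσ.1
      = ((hσ.1.eigenvectorUnitary : Matrix (Fin K) (Fin K) ℂ) *
        Matrix.diagonal (RCLike.ofReal ∘ hσ.1.eigenvalues) *
        star (hσ.1.eigenvectorUnitary : Matrix (Fin K) (Fin K) ℂ)) * rangeProj σ hσ.1 := by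
        rw [← spec_eq' σ hσ.1]
    _ = _ := by rw [key, ← spec_eq' σ hσ.1]

lemma sqrt_mulVec_zero {K : ℕ} {ρ : Matrix (Fin K) (Fin K) ℂ} (hρ : ρ.PosSemidef)
    (v : Fin K → ℂ) (h : ρ *ᵥ v = 0) : psdSqrt ρ hρ *ᵥ v = 0 := by
  have h2 : star (psdSqrt ρ hρ *ᵥ v) ⬝ᵥ (psdSqrt ρ hρ *ᵥ v) = 0 := by
    rw [star_mulVec, ← dotProduct_mulVec, mulVec_mulVec, psdSqrt_conjTranspose ρ hρ,
      psdSqrt_mul_self ρ hρ, h, dotProduct_zero]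
  exact dotProduct_star_self_eq_zero.mp h2

lemma sqrt_mul_rangeProj {K : ℕ} {ρ σ : Matrix (Fin K) (Fin K) ℂ}
    (hρ : ρ.PosSemidef) (hσ : σ.PosSemidef) (hac : AbsCont ρ σ) :
    psdSqrt ρ hρ * rangeProj σ hσ.1 = psdSqrt ρ hρ := by
  have hPσ : σ * (rangeProj σ hσ.1 - 1) = 0 := by
    rw [mul_sub, sigma_mul_rangeProj σ hσ, mul_one, sub_self]
  have hcol : ∀ j, psdSqrt ρ hρ *ᵥ (fun k => (rangeProj σ hσ.1 - 1) k j) = 0 := by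
    intro j
    apply sqrt_mulVec_zero hρ
    apply hac
    funext i
    have := congrFun (congrFun hPσ i) j
    simpa [mul_apply, mulVec, dotProduct] using this
  have hz : psdSqrt ρ hρ * (rangeProj σ hσ.1 - 1) = 0 := by
    ext i j
    have := congrFun (hcol j) i
    simpa [mul_apply, mulVec, dotProduct] using this
  rw [mul_sub, mul_one, sub_eq_zero] at hz
  exact hz

/-- Chain rule for the density-operator Radon–Nikodym derivative:
if ρ ≪ σ and σ ≪ τ then φ(ρ,τ)[X] = φ(ρ,σ)[φ(σ,τ)[X]] for every matrix X. -/
theorem rnDeriv_chain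
    (K : ℕ) (hK : 1 ≤ K) (ρ σ τ : Matrix (Fin K) (Fin K) ℂ)
    (hρ : ρ.PosSemidef) (hσ : σ.PosSemidef) (hτ : τ.PosSemidef)
    (hac₁ : AbsCont ρ σ) (hac₂ : AbsCont σ τ) :
    ∀ X : Matrix (Fin K) (Fin K) ℂ,
      rnDeriv ρ τ hρ hτ X = rnDeriv ρ σ hρ hσ (rnDeriv σ τ hσ hτ X) := by
  intro X
  have h1 : psdSqrt ρ hρ * rangeProj σ hσ.1 = psdSqrt ρ hρ := sqrt_mul_rangeProj hρ hσ hac₁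
  have h2 : rangeProj σ hσ.1 * psdSqrt ρ hρ = psdSqrt ρ hρ := by
    have := congrArg conjTranspose h1
    rwa [conjTranspose_mul, (rangeProj_isHermitian σ hσ.1).eq, psdSqrt_conjTranspose ρ hρ] at this
  unfold rnDeriv
  calc psdSqrt ρ hρ * invSqrt τ hτ.1 * X * invSqrt τ hτ.1 * psdSqrt ρ hρ
      = (psdSqrt ρ hρ * rangeProj σ hσ.1) * invSqrt τ hτ.1 * X * invSqrt τ hτ.1 *
        (rangeProj σ hσ.1 * psdSqrt ρ hρ) := by rw [h1, h2]
    _ = (psdSqrt ρ hρ * (invSqrt σ hσ.1 * psdSqrt σ hσ)) * invSqrt τ hτ.1 * X * invSqrt τ hτ.1 *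
        ((psdSqrt σ hσ * invSqrt σ hσ.1) * psdSqrt ρ hρ) := by
        rw [invSqrt_mul_sqrt, sqrt_mul_invSqrt]
    _ = psdSqrt ρ hρ * invSqrt σ hσ.1 * (psdSqrt σ hσ * invSqrt τ hτ.1 * X * invSqrt τ hτ.1 * psdSqrt σ hσ) *
        invSqrt σ hσ.1 * psdSqrt ρ hρ := by
        simp only [mul_assoc]
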